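/- If events E_1,...,E_n and graph G satisfy Pr[E_i | ∩_{j∈J} ¬E_j] = Pr[E_i] for all i and all J ⊆ [n]∖Γ⁺(i), set p_i = Pr[E_i]. If q_S = Σ_{I∈Ind(G), S⊆I} (-1)^{|I∖S|} ∏_{i∈I} p_i ≥ 0 for all S ⊆ [n], then Pr[∩_{i=1}^n ¬E_i] ≥ q_∅. -/

import Mathlib

open Finset MeasureTheory

/-- `I` is an independent set of `G`. -/
def Indep {n : ℕ} (G : SimpleGraph (Fin n)) (I : Finset (Fin n)) : Prop :=
  ∀ i ∈ I, ∀ j ∈ I, ¬ G.Adj i j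

instance {n : ℕ} (G : SimpleGraph (Fin n)) [DecidableRel G.Adj] (I : Finset (Fin n)) :
    Decidable (Indep G I) := by unfold Indep; infer_instance

/-- Closed neighborhood `Γ⁺(a)`. -/
def Gp {n : ℕ} (G : SimpleGraph (Fin n)) [DecidableRel G.Adj] (a : Fin n) : Finset (Fin n) :=
  insert a (G.neighborFinset a)

/-- Shearer coefficient `q̆_S`. -/
def qb {n : ℕ} (G : SimpleGraph (Fin n)) [DecidableRel G.Adj] (p : Fin n → ℝ)
    (S : Finset (Fin n)) : ℝ :=
  ∑ I ∈ S.powerset.filter (fun I => Indep G I), (-1 : ℝ) ^ I.card * ∏ i ∈ I, p i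

/-- Cluster-expansion polynomial `Y_S`. -/
def Yf {n : ℕ} (G : SimpleGraph (Fin n)) [DecidableRel G.Adj] (y : Fin n → ℝ)
    (S : Finset (Fin n)) : ℝ :=
  ∑ I ∈ S.powerset.filter (fun I => Indep G I), ∏ i ∈ I, y i

/-- Shearer's original coefficient `q_S`. -/
def qf {n : ℕ} (G : SimpleGraph (Fin n)) [DecidableRel G.Adj] (p : Fin n → ℝ)
    (S : Finset (Fin n)) : ℝ :=
  ∑ I ∈ (Finset.univ : Finset (Finset (Fin n))).filter (fun I => Indep G I ∧ S ⊆ I),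
    (-1 : ℝ) ^ (I \ S).card * ∏ i ∈ I, p i

section Comb
variable {n : ℕ} (G : SimpleGraph (Fin n)) [DecidableRel G.Adj] (p : Fin n → ℝ)

lemma real_sum_powerset {α : Type*} [DecidableEq α] (x : Finset α) :
    (∑ m ∈ x.powerset, (-1 : ℝ) ^ m.card) = if x = ∅ then 1 else 0 := by
  have := @Finset.sum_powerset_neg_one_pow_card α _ x
  have h2 : ((∑ m ∈ x.powerset, (-1 : ℤ) ^ m.card : ℤ) : ℝ)
      = ∑ m ∈ x.powerset, (-1 : ℝ) ^ m.card := by push_cast; ring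
  rw [← h2, this]
  split <;> norm_num

lemma qb_eq_sum_qf (T : Finset (Fin n)) :
    qb G p T = ∑ S ∈ (Finset.univ \ T).powerset, qf G p S := by
  have hqf : ∀ S : Finset (Fin n), qf G p S =
      ∑ I ∈ (Finset.univ : Finset (Finset (Fin n))).filter (fun I => Indep G I),
        (if S ⊆ I then (-1 : ℝ) ^ (I \ S).card * ∏ i ∈ I, p i else 0) := by
    intro S
    rw [qf, ← Finset.sum_filter]
    congr 1
    ext I
    simp [and_comm]
  calc qb G p T
      = ∑ I ∈ (Finset.univ : Finset (Finset (Fin n))).filter (fun I => Indep G I),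
          (∑ S ∈ (Finset.univ \ T).powerset,
            (if S ⊆ I then (-1 : ℝ) ^ (I \ S).card * ∏ i ∈ I, p i else 0)) := by
        rw [qb]
        have key : ∀ I : Finset (Fin n),
            (∑ S ∈ (Finset.univ \ T).powerset,
              (if S ⊆ I then (-1 : ℝ) ^ (I \ S).card * ∏ i ∈ I, p i else 0))
            = (if I ⊆ T then (-1 : ℝ) ^ I.card else 0) * ∏ i ∈ I, p i := by
          intro I
          rw [← Finset.sum_filter]
          have hfe : (Finset.univ \ T).powerset.filter (fun S => S ⊆ I) = (I \ T).powerset := by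
            ext S
            simp only [Finset.mem_filter, Finset.mem_powerset, Finset.subset_sdiff]
            constructor
            · rintro ⟨⟨-, h2⟩, h3⟩; exact ⟨h3, h2⟩
            · rintro ⟨h1, h2⟩; exact ⟨⟨Finset.subset_univ S, h2⟩, h1⟩
          rw [hfe]
          have hcard : ∀ S ∈ (I \ T).powerset, (-1 : ℝ) ^ (I \ S).card * ∏ i ∈ I, p i
              = ((-1 : ℝ) ^ I.card * (-1 : ℝ) ^ S.card) * ∏ i ∈ I, p i := by
            intro S hS
            have hSI : S ⊆ I := (Finset.mem_powerset.1 hS).trans (Finset.sdiff_subset)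
            have h1 : (I \ S).card = I.card - S.card := Finset.card_sdiff_of_subset hSI
            have h2 : S.card ≤ I.card := Finset.card_le_card hSI
            congr 1
            rw [h1]
            have key2 : (-1 : ℝ) ^ (I.card - S.card) * (-1 : ℝ) ^ S.card = (-1 : ℝ) ^ I.card := by
              rw [← pow_add, Nat.sub_add_cancel h2]
            have hsq : ((-1 : ℝ) ^ S.card) * ((-1 : ℝ) ^ S.card) = 1 := by
              rw [← pow_add, ← two_mul, pow_mul]; norm_num
            calc ((-1 : ℝ)) ^ (I.card - S.card)
                = ((-1 : ℝ) ^ (I.card - S.card) * (-1) ^ S.card) * (-1) ^ S.card := by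
                  rw [mul_assoc, hsq, mul_one]
              _ = (-1) ^ I.card * (-1) ^ S.card := by rw [key2]
          rw [Finset.sum_congr rfl hcard, ← Finset.sum_mul, ← Finset.mul_sum,
            real_sum_powerset]
          by_cases h : I ⊆ T <;> simp [h, Finset.sdiff_eq_empty_iff_subset]
        rw [Finset.sum_congr rfl (fun I _ => key I)]
        simp only [ite_mul, zero_mul]
        rw [← Finset.sum_filter]
        congr 1
        ext I
        simp [and_comm]
    _ = ∑ S ∈ (Finset.univ \ T).powerset, qf G p S := by
        rw [Finset.sum_comm]
        exact Finset.sum_congr rfl fun S _ => (hqf S).symm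

lemma qf_empty_eq_qb_univ : qf G p ∅ = qb G p Finset.univ := by
  rw [qb_eq_sum_qf]
  simp

variable (hq : ∀ S : Finset (Fin n), 0 ≤ qf G p S)

include hq in
lemma qb_nonneg (T : Finset (Fin n)) : 0 ≤ qb G p T := by
  rw [qb_eq_sum_qf]
  exact Finset.sum_nonneg fun S _ => hq S

include hq in
lemma qb_mono {T U : Finset (Fin n)} (h : T ⊆ U) : qb G p U ≤ qb G p T := by
  rw [qb_eq_sum_qf, qb_eq_sum_qf]
  apply Finset.sum_le_sum_of_subset_of_nonneg
  · exact Finset.powerset_mono.2 (Finset.sdiff_subset_sdiff (le_refl _) h)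
  · exact fun S _ _ => hq S

end Comb

section Rec
variable {n : ℕ} (G : SimpleGraph (Fin n)) [DecidableRel G.Adj] (p : Fin n → ℝ)

lemma indep_mono {I J : Finset (Fin n)} (h : I ⊆ J) (hJ : Indep G J) : Indep G I :=
  fun i hi j hj => hJ i (h hi) j (h hj)

lemma mem_Gp {x a : Fin n} : x ∈ Gp G a ↔ x = a ∨ G.Adj a x := by
  simp [Gp]

lemma qb_empty : qb G p ∅ = 1 := by
  have h : Indep G (∅ : Finset (Fin n)) := fun i hi => by simp at hi
  rw [qb]
  rw [Finset.powerset_empty, Finset.filter_singleton]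
  simp [h]

lemma qb_rec {T : Finset (Fin n)} {a : Fin n} (ha : a ∈ T) :
    qb G p T = qb G p (T.erase a) - p a * qb G p (T \ Gp G a) := by
  rw [qb]
  rw [← Finset.sum_filter_add_sum_filter_not (T.powerset.filter (fun I => Indep G I))
    (fun I => a ∈ I)]
  have h1 : (T.powerset.filter (fun I => Indep G I)).filter (fun I => ¬ a ∈ I)
      = (T.erase a).powerset.filter (fun I => Indep G I) := by
    ext I
    simp only [Finset.mem_filter, Finset.mem_powerset, Finset.subset_erase]
    tauto
  have h2 : ∑ I ∈ (T.powerset.filter (fun I => Indep G I)).filter (fun I => a ∈ I),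
      (-1 : ℝ) ^ I.card * ∏ i ∈ I, p i
      = ∑ J ∈ (T \ Gp G a).powerset.filter (fun J => Indep G J),
          (-(p a)) * ((-1 : ℝ) ^ J.card * ∏ i ∈ J, p i) := by
    apply Finset.sum_nbij' (fun I => I.erase a) (fun J => insert a J)
    · intro I hI
      simp only [Finset.mem_filter, Finset.mem_powerset] at hI ⊢
      obtain ⟨⟨hIT, hInd⟩, haI⟩ := hI
      refine ⟨fun x hx => ?_, indep_mono G (Finset.erase_subset a I) hInd⟩
      rw [Finset.mem_sdiff]
      obtain ⟨hxa, hxI⟩ := Finset.mem_erase.1 hx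
      refine ⟨hIT hxI, fun hxGp => ?_⟩
      rcases (mem_Gp G).1 hxGp with h | h
      · exact hxa h
      · exact hInd a haI x hxI h
    · intro J hJ
      simp only [Finset.mem_filter, Finset.mem_powerset] at hJ ⊢
      obtain ⟨hJT, hInd⟩ := hJ
      have haJ : a ∉ J := fun h => ((Finset.mem_sdiff.1 (hJT h)).2) ((mem_Gp G).2 (Or.inl rfl))
      refine ⟨⟨Finset.insert_subset ha (fun x hx => (Finset.mem_sdiff.1 (hJT hx)).1), ?_⟩,
        Finset.mem_insert_self a J⟩
      intro i hi j hj
      rcases Finset.mem_insert.1 hi with rfl | hi' <;> rcases Finset.mem_insert.1 hj with rfl | hj'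
      · exact fun h => G.loopless.irrefl _ h
      · exact fun h => (Finset.mem_sdiff.1 (hJT hj')).2 ((mem_Gp G).2 (Or.inr h))
      · exact fun h => (Finset.mem_sdiff.1 (hJT hi')).2 ((mem_Gp G).2 (Or.inr h.symm))
      · exact hInd i hi' j hj'
    · intro I hI
      simp only [Finset.mem_filter] at hI
      exact Finset.insert_erase hI.2
    · intro J hJ
      simp only [Finset.mem_filter, Finset.mem_powerset] at hJ
      have haJ : a ∉ J := fun h => ((Finset.mem_sdiff.1 (hJ.1 h)).2) ((mem_Gp G).2 (Or.inl rfl))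
      exact Finset.erase_insert haJ
    · intro I hI
      simp only [Finset.mem_filter] at hI
      have haI : a ∈ I := hI.2
      have hcard : I.card = (I.erase a).card + 1 := by
        have hpos : 0 < I.card := Finset.card_pos.2 ⟨a, haI⟩
        rw [Finset.card_erase_of_mem haI]
        omega
      have hprod : ∏ i ∈ I, p i = p a * ∏ i ∈ I.erase a, p i := by
        rw [← Finset.prod_erase_mul I p haI]; ring
      rw [hcard, hprod, pow_succ]
      ring
  rw [h1, h2, ← Finset.mul_sum, ← qb, ← qb]
  ring

end Rec

section Prob
variable {Ω : Type*} [MeasurableSpace Ω] (μ : Measure Ω) [IsProbabilityMeasure μ]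
  {n : ℕ} (E : Fin n → Set Ω)

/-- Probability of avoiding all events indexed by `T`. -/
def Pb (T : Finset (Fin n)) : ℝ := (μ (⋂ i ∈ T, (E i)ᶜ)).toReal

lemma Pb_nonneg (T : Finset (Fin n)) : 0 ≤ Pb μ E T := ENNReal.toReal_nonneg

lemma Pb_empty : Pb μ E ∅ = 1 := by
  simp [Pb]

lemma Ameas (hE : ∀ i, MeasurableSet (E i)) (T : Finset (Fin n)) :
    MeasurableSet (⋂ i ∈ T, (E i)ᶜ) :=
  MeasurableSet.biInter (Set.to_countable _) (fun b _ => (hE b).compl)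

lemma Amono {T U : Finset (Fin n)} (h : T ⊆ U) :
    (⋂ i ∈ U, (E i)ᶜ) ⊆ (⋂ i ∈ T, (E i)ᶜ) := by
  apply Set.biInter_subset_biInter_left
  exact fun x hx => h hx

lemma Pb_split (hE : ∀ i, MeasurableSet (E i)) {T : Finset (Fin n)} {a : Fin n} (ha : a ∈ T) :
    Pb μ E (T.erase a) = (μ (E a ∩ ⋂ i ∈ T.erase a, (E i)ᶜ)).toReal + Pb μ E T := by
  set X := ⋂ i ∈ T.erase a, (E i)ᶜ with hX
  have hAT : (⋂ i ∈ T, (E i)ᶜ) = X \ E a := by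
    conv_lhs => rw [← Finset.insert_erase ha]
    rw [Finset.set_biInter_insert]
    rw [Set.diff_eq, Set.inter_comm]
  have hsplit : μ (X ∩ E a) + μ (X \ E a) = μ X := measure_inter_add_diff X (hE a)
  rw [Pb, Pb, hAT, ← hsplit, ENNReal.toReal_add (measure_ne_top μ _) (measure_ne_top μ _),
    Set.inter_comm]

lemma Pb_step (hE : ∀ i, MeasurableSet (E i)) (G : SimpleGraph (Fin n)) [DecidableRel G.Adj]
    (p : Fin n → ℝ)
    (hpdef : ∀ i, p i = (μ (E i)).toReal)
    (hdep : ∀ i, ∀ J : Finset (Fin n), J ⊆ Finset.univ \ Gp G i →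
      0 < (μ (⋂ j ∈ J, (E j)ᶜ)).toReal →
      (μ (E i ∩ ⋂ j ∈ J, (E j)ᶜ)).toReal / (μ (⋂ j ∈ J, (E j)ᶜ)).toReal = (μ (E i)).toReal)
    {T : Finset (Fin n)} {a : Fin n} (ha : a ∈ T) :
    Pb μ E T ≥ Pb μ E (T.erase a) - p a * Pb μ E (T \ Gp G a) := by
  have hsub : T \ Gp G a ⊆ T.erase a := by
    intro x hx
    obtain ⟨hxT, hxGp⟩ := Finset.mem_sdiff.1 hx
    exact Finset.mem_erase.2 ⟨fun h => hxGp ((mem_Gp G).2 (Or.inl h)), hxT⟩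
  have hm : (μ (E a ∩ ⋂ i ∈ T.erase a, (E i)ᶜ)).toReal
      ≤ (μ (E a ∩ ⋂ i ∈ T \ Gp G a, (E i)ᶜ)).toReal := by
    apply ENNReal.toReal_mono (measure_ne_top μ _)
    exact measure_mono (Set.inter_subset_inter_right _ (Amono (E := E) hsub))
  have hkey : (μ (E a ∩ ⋂ i ∈ T \ Gp G a, (E i)ᶜ)).toReal ≤ p a * Pb μ E (T \ Gp G a) := by
    by_cases hpos : 0 < Pb μ E (T \ Gp G a)
    · have hJ : T \ Gp G a ⊆ Finset.univ \ Gp G a :=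
        Finset.sdiff_subset_sdiff (Finset.subset_univ T) (le_refl _)
      have hpos' : 0 < (μ (⋂ j ∈ T \ Gp G a, (E j)ᶜ)).toReal := hpos
      have h := hdep a (T \ Gp G a) hJ hpos'
      rw [div_eq_iff (ne_of_gt hpos')] at h
      rw [Pb, h, ← hpdef a]
    · have h0 : Pb μ E (T \ Gp G a) = 0 :=
        le_antisymm (not_lt.1 hpos) (Pb_nonneg μ E _)
      have : (μ (E a ∩ ⋂ i ∈ T \ Gp G a, (E i)ᶜ)).toReal ≤ Pb μ E (T \ Gp G a) := by
        apply ENNReal.toReal_mono (measure_ne_top μ _)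
        exact measure_mono (Set.inter_subset_right)
      rw [h0] at this
      rw [h0, mul_zero]
      exact this
  have := Pb_split μ E hE ha
  linarith

end Prob

section Induction
variable {n : ℕ} (G : SimpleGraph (Fin n)) [DecidableRel G.Adj] (p : Fin n → ℝ)
  (P : Finset (Fin n) → ℝ)
  (hq : ∀ S : Finset (Fin n), 0 ≤ qf G p S) (hp0 : ∀ i, 0 ≤ p i)
  (hP0 : ∀ T, 0 ≤ P T)
  (hstep : ∀ T : Finset (Fin n), ∀ a ∈ T, P T ≥ P (T.erase a) - p a * P (T \ Gp G a))

include hq hp0 hP0 hstep in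
lemma keyB : ∀ m : ℕ, ∀ T : Finset (Fin n), T.card ≤ m → ∀ a ∈ T,
    qb G p (T.erase a) * P T ≥ qb G p T * P (T.erase a) := by
  intro m
  induction m with
  | zero =>
    intro T hT a ha
    have : T = ∅ := Finset.card_eq_zero.1 (Nat.le_zero.1 hT)
    subst this; simp at ha
  | succ m ih =>
    have chain : ∀ k : ℕ, ∀ U V : Finset (Fin n), V ⊆ U → (U \ V).card ≤ k → U.card ≤ m →
        qb G p V * P U ≥ qb G p U * P V := by
      intro k
      induction k with
      | zero =>
        intro U V hVU h0 _
        have : U = V := Finset.Subset.antisymm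
          (Finset.sdiff_eq_empty_iff_subset.1 (Finset.card_eq_zero.1 (Nat.le_zero.1 h0))) hVU
        subst this; exact le_refl _
      | succ k ihk =>
        intro U V hVU hk hUm
        by_cases hUV : U = V
        · subst hUV; exact le_refl _
        · have hne : (U \ V).Nonempty := by
            rw [Finset.sdiff_nonempty]
            exact fun h => hUV (Finset.Subset.antisymm h hVU)
          obtain ⟨b, hb⟩ := hne
          obtain ⟨hbU, hbV⟩ := Finset.mem_sdiff.1 hb
          set U' := U.erase b with hU'
          have hVU' : V ⊆ U' := fun x hx => Finset.mem_erase.2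
            ⟨fun h => hbV (h ▸ hx), hVU hx⟩
          have hcard' : (U' \ V).card ≤ k := by
            have : U' \ V = (U \ V).erase b := by
              ext x
              simp only [hU', Finset.mem_sdiff, Finset.mem_erase]
              tauto
            rw [this, Finset.card_erase_of_mem hb]
            omega
          have hU'm : U'.card ≤ m :=
            le_trans (Finset.card_le_card (Finset.erase_subset b U)) hUm
          have h1 : qb G p U' * P U ≥ qb G p U * P U' := ih U hUm b hbU
          have h2 : qb G p V * P U' ≥ qb G p U' * P V := ihk U' V hVU' hcard' hU'm
          by_cases hz : qb G p U' = 0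
          · have hU0 : qb G p U = 0 := le_antisymm
              (hz ▸ qb_mono G p hq (Finset.erase_subset b U)) (qb_nonneg G p hq U)
            rw [hU0, zero_mul]
            exact mul_nonneg (qb_nonneg G p hq V) (hP0 U)
          · have hpos : 0 < qb G p U' := lt_of_le_of_ne (qb_nonneg G p hq U') (Ne.symm hz)
            have c1 : qb G p V * (qb G p U' * P U) ≥ qb G p V * (qb G p U * P U') :=
              mul_le_mul_of_nonneg_left h1 (qb_nonneg G p hq V)
            have c2 : qb G p U * (qb G p V * P U') ≥ qb G p U * (qb G p U' * P V) :=
              mul_le_mul_of_nonneg_left h2 (qb_nonneg G p hq U)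
            nlinarith [hpos, c1, c2]
    intro T hT a ha
    have hrec : qb G p T = qb G p (T.erase a) - p a * qb G p (T \ Gp G a) := qb_rec G p ha
    have hstepT := hstep T a ha
    have hVU : T \ Gp G a ⊆ T.erase a := by
      intro x hx
      obtain ⟨hxT, hxGp⟩ := Finset.mem_sdiff.1 hx
      exact Finset.mem_erase.2 ⟨fun h => hxGp ((mem_Gp G).2 (Or.inl h)), hxT⟩
    have hUm : (T.erase a).card ≤ m := by
      rw [Finset.card_erase_of_mem ha]
      omega
    have hchain : qb G p (T \ Gp G a) * P (T.erase a)
        ≥ qb G p (T.erase a) * P (T \ Gp G a) :=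
      chain ((T.erase a) \ (T \ Gp G a)).card (T.erase a) (T \ Gp G a) hVU le_rfl hUm
    have h1 : qb G p (T.erase a) * P T
        ≥ qb G p (T.erase a) * (P (T.erase a) - p a * P (T \ Gp G a)) :=
      mul_le_mul_of_nonneg_left hstepT (qb_nonneg G p hq _)
    have h2 : 0 ≤ p a * (qb G p (T \ Gp G a) * P (T.erase a)
        - qb G p (T.erase a) * P (T \ Gp G a)) :=
      mul_nonneg (hp0 a) (sub_nonneg.2 hchain)
    rw [hrec]
    nlinarith [h1, h2]

include hq hp0 hP0 hstep in
lemma keyA (hP1 : P ∅ = 1) : ∀ m : ℕ, ∀ T : Finset (Fin n), T.card ≤ m → P T ≥ qb G p T := by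
  intro m
  induction m with
  | zero =>
    intro T hT
    have : T = ∅ := Finset.card_eq_zero.1 (Nat.le_zero.1 hT)
    subst this
    rw [hP1, qb_empty]
  | succ m ih =>
    intro T hT
    by_cases hTe : T = ∅
    · subst hTe; rw [hP1, qb_empty]
    · obtain ⟨a, ha⟩ := Finset.nonempty_iff_ne_empty.2 hTe
      have hB := keyB G p P hq hp0 hP0 hstep (m + 1) T hT a ha
      have hUm : (T.erase a).card ≤ m := by
        have := Finset.card_erase_of_mem ha
        have hpos : 0 < T.card := Finset.card_pos.2 ⟨a, ha⟩
        omega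
      have hIH := ih (T.erase a) hUm
      by_cases hz : qb G p (T.erase a) = 0
      · have hT0 : qb G p T = 0 := le_antisymm
          (hz ▸ qb_mono G p hq (Finset.erase_subset a T)) (qb_nonneg G p hq T)
        rw [hT0]
        exact hP0 T
      · have hpos : 0 < qb G p (T.erase a) := lt_of_le_of_ne (qb_nonneg G p hq _) (Ne.symm hz)
        have h2 : qb G p T * P (T.erase a) ≥ qb G p T * qb G p (T.erase a) :=
          mul_le_mul_of_nonneg_left hIH (qb_nonneg G p hq T)
        have h3 : qb G p (T.erase a) * P T ≥ qb G p (T.erase a) * qb G p T := by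
          calc qb G p (T.erase a) * P T ≥ qb G p T * P (T.erase a) := hB
            _ ≥ qb G p T * qb G p (T.erase a) := h2
            _ = qb G p (T.erase a) * qb G p T := mul_comm _ _
        exact le_of_mul_le_mul_left h3 hpos

end Induction

theorem original_shearer {Ω : Type*} [MeasurableSpace Ω] (μ : Measure Ω) [IsProbabilityMeasure μ]
    {n : ℕ} (G : SimpleGraph (Fin n)) [DecidableRel G.Adj]
    (E : Fin n → Set Ω) (hE : ∀ i, MeasurableSet (E i)) (p : Fin n → ℝ)
    (hpdef : ∀ i, p i = (μ (E i)).toReal)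
    (hdep : ∀ i, ∀ J : Finset (Fin n), J ⊆ Finset.univ \ Gp G i →
      0 < (μ (⋂ j ∈ J, (E j)ᶜ)).toReal →
      (μ (E i ∩ ⋂ j ∈ J, (E j)ᶜ)).toReal / (μ (⋂ j ∈ J, (E j)ᶜ)).toReal = (μ (E i)).toReal)
    (hq : ∀ S : Finset (Fin n), 0 ≤ qf G p S) :
    (μ (⋂ i, (E i)ᶜ)).toReal ≥ qf G p ∅ := by
  have hp0 : ∀ i, 0 ≤ p i := fun i => (hpdef i) ▸ ENNReal.toReal_nonneg
  have hstep : ∀ T : Finset (Fin n), ∀ a ∈ T,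
      Pb μ E T ≥ Pb μ E (T.erase a) - p a * Pb μ E (T \ Gp G a) :=
    fun T a ha => Pb_step μ E hE G p hpdef hdep ha
  have hA := keyA G p (Pb μ E) hq hp0 (fun T => Pb_nonneg μ E T) hstep (Pb_empty μ E)
    (Finset.univ : Finset (Fin n)).card Finset.univ le_rfl
  have heq : (⋂ i, (E i)ᶜ) = ⋂ i ∈ (Finset.univ : Finset (Fin n)), (E i)ᶜ := by
    simp
  rw [heq, qf_empty_eq_qb_univ]
  exact hA
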